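/- arXiv:2404.13233 — 7 statements merged into one kernel-verified Lean document; each statement's English description precedes it below -/
import Mathlib

section
/- For every vertex v_k of an undirected connected graph with nonnegative vertex multiplicities summing to a positive value, the L1 centrality C(v_k) = 1 - max_{j≠k} (max(0, Σ_i η_i (d(v_k,v_i) - d(v_j,v_i)) / (η_· d(v_j,v_k)))) satisfies 0 ≤ C(v_k) ≤ 1. -/
open Finset

/-- The `L₁` centrality of vertex `k` in a graph with geodesic distance `d` and
vertex multiplicities `η`. -/
noncomputable def L1Cent {n : ℕ} (d : Fin n → Fin n → ℝ) (η : Fin n → ℝ) (k : Fin n) : ℝ :=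
  1 - sSup ((fun j => max 0 ((∑ i, η i * (d k i - d j i)) / ((∑ i, η i) * d j k))) ''
      {j | j ≠ k})

theorem l1cent_mem_Icc {n : ℕ} (hn : 2 ≤ n) (d : Fin n → Fin n → ℝ)
    (hsymm : ∀ i j, d i j = d j i)
    (hzero : ∀ i, d i i = 0)
    (hpos : ∀ i j, i ≠ j → 0 < d i j)
    (htri : ∀ i j l, d i l ≤ d i j + d j l)
    (η : Fin n → ℝ) (hη : ∀ i, 0 ≤ η i) (hsum : 0 < ∑ i, η i)
    (k : Fin n) : 0 ≤ L1Cent d η k ∧ L1Cent d η k ≤ 1 := by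
  set S := ((fun j => max 0 ((∑ i, η i * (d k i - d j i)) / ((∑ i, η i) * d j k))) ''
      {j | j ≠ k}) with hS
  have hne : S.Nonempty := by
    obtain ⟨j, hj⟩ : ∃ j : Fin n, j ≠ k := by
      obtain ⟨j, hj⟩ := Fintype.exists_ne_of_one_lt_card (by simpa using (by omega : 1 < n) : 1 < Fintype.card (Fin n)) k
      exact ⟨j, hj⟩
    exact ⟨_, ⟨j, hj, rfl⟩⟩
  have hub : ∀ x ∈ S, x ≤ 1 := by
    rintro x ⟨j, hj, rfl⟩
    simp only [Set.mem_setOf_eq] at hj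
    have hd : 0 < d j k := hpos j k (fun h => hj (h ▸ rfl))
    have hden : 0 < (∑ i, η i) * d j k := mul_pos hsum hd
    have hnum : (∑ i, η i * (d k i - d j i)) ≤ (∑ i, η i) * d j k := by
      rw [Finset.sum_mul]
      apply Finset.sum_le_sum
      intro i _
      have : d k i - d j i ≤ d j k := by
        have := htri k j i
        rw [hsymm k j] at this
        linarith
      exact mul_le_mul_of_nonneg_left this (hη i)
    simp only [max_le_iff]
    exact ⟨zero_le_one, (div_le_one hden).mpr hnum⟩
  have hbdd : BddAbove S := ⟨1, hub⟩
  have hlb : (0 : ℝ) ≤ sSup S := by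
    obtain ⟨x, hx⟩ := hne
    refine le_trans ?_ (le_csSup hbdd hx)
    obtain ⟨j, hj, rfl⟩ := hx
    exact le_max_left _ _
  have hub' : sSup S ≤ 1 := csSup_le hne hub
  unfold L1Cent
  rw [← hS]
  constructor <;> linarith
end

section
/- If a vertex v_i has multiplicity satisfying η_i / η_· ≥ 1/2, then v_i is a graph median, and hence C(v_i) = 1. -/
open Finset

/-- A vertex carrying at least half of the total multiplicity is a graph median,
and hence has L1 centrality 1. -/
theorem median_of_half_multiplicity {n : ℕ} (hn : 2 ≤ n) (d : Fin n → Fin n → ℝ)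
    (hsymm : ∀ i j, d i j = d j i)
    (hzero : ∀ i, d i i = 0)
    (hpos : ∀ i j, i ≠ j → 0 < d i j)
    (htri : ∀ i j l, d i l ≤ d i j + d j l)
    (η : Fin n → ℝ) (hη : ∀ i, 0 ≤ η i) (hsum : 0 < ∑ j, η j)
    (i : Fin n) (hi : 1 / 2 ≤ η i / ∑ j, η j) :
    (∀ v, ∑ j, η j * d i j ≤ ∑ j, η j * d v j) ∧ L1Cent d η i = 1 := by
  have h2 : (∑ j, η j) ≤ 2 * η i := by
    rw [div_le_div_iff₀ (by norm_num) hsum] at hi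
    linarith
  have hmed : ∀ v, ∑ j, η j * d i j ≤ ∑ j, η j * d v j := by
    intro v
    by_cases hv : v = i
    · subst hv; exact le_refl _
    · have hdvi : 0 < d v i := hpos v i hv
      have key : ∀ j ∈ Finset.univ.erase i,
          η j * d i j - η j * d v j ≤ η j * d v i := by
        intro j _
        have h1 : d i j - d v j ≤ d v i := by
          have := htri i v j
          rw [hsymm v i]; linarith
        nlinarith [hη j]
      have hsum1 : ∑ j ∈ Finset.univ.erase i, (η j * d i j - η j * d v j)
          ≤ ∑ j ∈ Finset.univ.erase i, η j * d v i := Finset.sum_le_sum key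
      have herase : ∑ j ∈ Finset.univ.erase i, η j * d v i
          = ((∑ j, η j) - η i) * d v i := by
        rw [← Finset.sum_mul, Finset.sum_erase_eq_sub (Finset.mem_univ i)]
      have hfull : (η i * d i i - η i * d v i) +
          ∑ j ∈ Finset.univ.erase i, (η j * d i j - η j * d v j)
          = ∑ j, (η j * d i j - η j * d v j) :=
        Finset.add_sum_erase _ (fun j => η j * d i j - η j * d v j) (Finset.mem_univ i)
      have hdiff : ∑ j, (η j * d i j - η j * d v j) ≤ 0 := by
        rw [← hfull, hzero i]
        rw [herase] at hsum1
        nlinarith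
      rw [Finset.sum_sub_distrib] at hdiff
      linarith
  refine ⟨hmed, ?_⟩
  unfold L1Cent
  have hne : ∃ j : Fin n, j ≠ i := by
    have : 1 < Fintype.card (Fin n) := by simp; omega
    exact Fintype.exists_ne_of_one_lt_card this i
  have hX : ((fun j => max 0 ((∑ l, η l * (d i l - d j l)) / ((∑ l, η l) * d j i))) ''
      {j | j ≠ i}) = {0} := by
    apply Set.eq_singleton_iff_nonempty_unique_mem.mpr
    constructor
    · obtain ⟨j, hj⟩ := hne
      exact ⟨_, Set.mem_image_of_mem _ hj⟩
    · rintro x ⟨j, hj, rfl⟩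
      have hjne : j ≠ i := hj
      have hnum : (∑ l, η l * (d i l - d j l)) ≤ 0 := by
        have := hmed j
        have : ∑ l, (η l * d i l - η l * d j l) ≤ 0 := by
          rw [Finset.sum_sub_distrib]; linarith
        calc (∑ l, η l * (d i l - d j l)) = ∑ l, (η l * d i l - η l * d j l) := by
              apply Finset.sum_congr rfl; intro l _; ring
          _ ≤ 0 := this
      have hden : 0 < (∑ l, η l) * d j i := mul_pos hsum (hpos j i hjne)
      have : (∑ l, η l * (d i l - d j l)) / ((∑ l, η l) * d j i) ≤ 0 :=
        div_nonpos_of_nonpos_of_nonneg hnum (le_of_lt hden)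
      simp [max_eq_left this]
  rw [hX]
  simp
end

section
/- If a vertex v_i has multiplicity with η_i / η_· > 1/2, then v_i is the unique vertex whose L1 centrality equals 1; in particular, for every i' ≠ i, C(v_{i'}) ≤ 1 - (2η_i - η_·)/η_· < 1. -/
open Finset

/-- A vertex carrying more than half of the total multiplicity is the unique
vertex with L1 centrality 1; any other vertex satisfies
`C(v_i') ≤ 1 - (2η_i - η_·)/η_· < 1`. -/
theorem unique_max_of_majority_multiplicity {n : ℕ} (hn : 2 ≤ n) (d : Fin n → Fin n → ℝ)
    (hsymm : ∀ i j, d i j = d j i)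
    (hzero : ∀ i, d i i = 0)
    (hpos : ∀ i j, i ≠ j → 0 < d i j)
    (htri : ∀ i j l, d i l ≤ d i j + d j l)
    (η : Fin n → ℝ) (hη : ∀ i, 0 ≤ η i) (hsum : 0 < ∑ j, η j)
    (i : Fin n) (hi : 1 / 2 < η i / ∑ j, η j) :
    L1Cent d η i = 1 ∧ (∀ k, L1Cent d η k = 1 → k = i) ∧
      ∀ i', i' ≠ i →
        L1Cent d η i' ≤ 1 - (2 * η i - ∑ j, η j) / ∑ j, η j ∧ L1Cent d η i' < 1 := by
  have hS : 0 < ∑ j, η j := hsum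
  have h2 : 0 < 2 * η i - ∑ j, η j := by
    have h := (div_lt_div_iff₀ (by norm_num : (0:ℝ) < 2) hS).mp hi
    linarith
  -- the image sets are bounded above by 1
  have hbdd : ∀ k : Fin n,
      BddAbove ((fun j => max 0 ((∑ l, η l * (d k l - d j l)) / ((∑ l, η l) * d j k))) ''
        {j | j ≠ k}) := by
    intro k
    refine ⟨1, ?_⟩
    rintro x ⟨j, hj, rfl⟩
    have hd : 0 < d j k := hpos j k hj
    have hnum : ∑ l, η l * (d k l - d j l) ≤ (∑ l, η l) * d j k := by
      rw [Finset.sum_mul]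
      refine Finset.sum_le_sum fun l _ => ?_
      have h1 : d k l - d j l ≤ d j k := by
        have := htri k j l
        have := hsymm k j
        linarith
      exact mul_le_mul_of_nonneg_left h1 (hη l)
    have hr : (∑ l, η l * (d k l - d j l)) / ((∑ l, η l) * d j k) ≤ 1 :=
      (div_le_one (by positivity)).mpr hnum
    exact max_le zero_le_one hr
  -- every element of the set for the majority vertex i is 0
  have hval : ∀ j : Fin n, j ≠ i →
      max 0 ((∑ l, η l * (d i l - d j l)) / ((∑ l, η l) * d j i)) = 0 := by
    intro j hj
    have hd : 0 < d j i := hpos j i hj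
    have hnum : ∑ l, η l * (d i l - d j l) ≤ ((∑ l, η l) - 2 * η i) * d j i := by
      have hle : ∑ l, η l * (d i l - d j l) ≤
          ∑ l, (η l * d j i - (if l = i then 2 * η i * d j i else 0)) := by
        refine Finset.sum_le_sum fun l _ => ?_
        by_cases hl : l = i
        · subst hl
          rw [if_pos rfl]
          exact le_of_eq (by rw [hzero l]; ring)
        · rw [if_neg hl]
          have h1 : d i l - d j l ≤ d j i := by
            have := htri i j l
            have := hsymm i j
            linarith
          have := mul_le_mul_of_nonneg_left h1 (hη l)
          linarith
      have heq : ∑ l, (η l * d j i - (if l = i then 2 * η i * d j i else 0))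
          = ((∑ l, η l) - 2 * η i) * d j i := by
        rw [Finset.sum_sub_distrib, ← Finset.sum_mul, Finset.sum_ite_eq' Finset.univ i]
        simp only [Finset.mem_univ, if_true]
        ring
      linarith [heq ▸ hle]
    have hratio : (∑ l, η l * (d i l - d j l)) / ((∑ l, η l) * d j i) ≤ 0 := by
      apply div_nonpos_of_nonpos_of_nonneg
      · nlinarith
      · positivity
    exact max_eq_left hratio
  have hsup_i : sSup ((fun j => max 0 ((∑ l, η l * (d i l - d j l)) / ((∑ l, η l) * d j i))) ''
      {j | j ≠ i}) = 0 := by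
    obtain ⟨j0, hj0⟩ := Fintype.exists_ne_of_one_lt_card (by simp; omega) i
    have hset : ((fun j => max 0 ((∑ l, η l * (d i l - d j l)) / ((∑ l, η l) * d j i))) ''
        {j | j ≠ i}) = {0} := by
      apply Set.eq_singleton_iff_unique_mem.mpr
      constructor
      · exact ⟨j0, hj0, hval j0 hj0⟩
      · rintro x ⟨j, hj, rfl⟩
        exact hval j hj
    rw [hset, csSup_singleton]
  have hone : L1Cent d η i = 1 := by
    unfold L1Cent
    rw [hsup_i, sub_zero]
  -- lower bound on the sup for any other vertex
  have key : ∀ k : Fin n, k ≠ i →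
      (2 * η i - ∑ j, η j) / ∑ j, η j ≤
        sSup ((fun j => max 0 ((∑ l, η l * (d k l - d j l)) / ((∑ l, η l) * d j k))) ''
          {j | j ≠ k}) := by
    intro k hk
    have hd : 0 < d i k := hpos i k hk.symm
    have hnum : (2 * η i - ∑ l, η l) * d i k ≤ ∑ l, η l * (d k l - d i l) := by
      have hle : ∑ l, (-(η l * d i k) + (if l = i then 2 * η i * d i k else 0)) ≤
          ∑ l, η l * (d k l - d i l) := by
        refine Finset.sum_le_sum fun l _ => ?_
        by_cases hl : l = i
        · subst hl
          rw [if_pos rfl]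
          exact le_of_eq (by rw [hzero l, hsymm k l]; ring)
        · rw [if_neg hl]
          have h1 : -(d i k) ≤ d k l - d i l := by
            have := htri i k l
            linarith
          have := mul_le_mul_of_nonneg_left h1 (hη l)
          nlinarith
      have heq : ∑ l, (-(η l * d i k) + (if l = i then 2 * η i * d i k else 0))
          = (2 * η i - ∑ l, η l) * d i k := by
        rw [Finset.sum_add_distrib, Finset.sum_ite_eq' Finset.univ i]
        simp only [Finset.mem_univ, if_true, Finset.sum_neg_distrib, ← Finset.sum_mul]
        ring
      linarith [heq ▸ hle]
    have hmem : max 0 ((∑ l, η l * (d k l - d i l)) / ((∑ l, η l) * d i k)) ∈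
        ((fun j => max 0 ((∑ l, η l * (d k l - d j l)) / ((∑ l, η l) * d j k))) ''
          {j | j ≠ k}) := ⟨i, hk.symm, rfl⟩
    refine le_trans ?_ (le_csSup (hbdd k) hmem)
    refine le_trans ?_ (le_max_right _ _)
    calc (2 * η i - ∑ j, η j) / ∑ j, η j
        = ((2 * η i - ∑ l, η l) * d i k) / ((∑ l, η l) * d i k) := by
          rw [mul_div_mul_right _ _ (ne_of_gt hd)]
      _ ≤ (∑ l, η l * (d k l - d i l)) / ((∑ l, η l) * d i k) :=
          (div_le_div_iff_of_pos_right (by positivity)).mpr hnum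
  have hposq : 0 < (2 * η i - ∑ j, η j) / ∑ j, η j := div_pos h2 hS
  refine ⟨hone, ?_, ?_⟩
  · intro k hk1
    by_contra hk
    have h1 := key k hk
    unfold L1Cent at hk1
    linarith
  · intro i' hi'
    have h1 := key i' hi'
    constructor
    · unfold L1Cent
      linarith
    · unfold L1Cent
      linarith
end

section
/- For every vertex v_i, the L1 centrality satisfies the lower bound C(v_i) ≥ min{2η_i/η_·, 1}. -/
open Finset

/-- Lower bound: `C(v_i) ≥ min {2η_i/η_·, 1}`. -/
theorem l1cent_lower_bound {n : ℕ} (hn : 2 ≤ n) (d : Fin n → Fin n → ℝ)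
    (hsymm : ∀ i j, d i j = d j i)
    (hzero : ∀ i, d i i = 0)
    (hpos : ∀ i j, i ≠ j → 0 < d i j)
    (htri : ∀ i j l, d i l ≤ d i j + d j l)
    (η : Fin n → ℝ) (hη : ∀ i, 0 ≤ η i) (hsum : 0 < ∑ j, η j)
    (i : Fin n) :
    min (2 * η i / ∑ j, η j) 1 ≤ L1Cent d η i := by
  set S := (∑ j, η j) with hSdef
  set a := 2 * η i / S with ha
  have hM0 : (0:ℝ) ≤ max 0 (1 - a) := le_max_left _ _
  have key : sSup ((fun j => max 0 ((∑ l, η l * (d i l - d j l)) / ((∑ l, η l) * d j i))) ''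
      {j | j ≠ i}) ≤ max 0 (1 - a) := by
    apply Real.sSup_le _ hM0
    rintro x ⟨j, hj, rfl⟩
    simp only [Set.mem_setOf_eq] at hj
    refine max_le_max le_rfl ?_
    have hd : 0 < d j i := hpos j i hj
    have hden : 0 < S * d j i := mul_pos hsum hd
    rw [div_le_iff₀ hden]
    have hnum : ∑ l, η l * (d i l - d j l) ≤
        ∑ l, (η l * d j i - if l = i then 2 * η i * d j i else 0) := by
      apply Finset.sum_le_sum
      intro l _
      by_cases hl : l = i
      · rw [hl, hzero i, if_pos rfl]
        nlinarith [hη i, hd]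
      · simp [hl]
        have h1 : d i l - d j l ≤ d j i := by
          have := htri i j l
          have := hsymm i j
          linarith
        nlinarith [hη l]
    have hsumeq : ∑ l, (η l * d j i - if l = i then 2 * η i * d j i else 0)
        = S * d j i - 2 * η i * d j i := by
      rw [Finset.sum_sub_distrib, ← Finset.sum_mul, Finset.sum_ite_eq' Finset.univ i]
      simp [hSdef]
    have : (1 - a) * (S * d j i) = S * d j i - 2 * η i * d j i := by
      field_simp [ha]
      rw [ha, sub_mul, div_mul_cancel₀ _ hsum.ne']; ring
    rw [this]
    calc ∑ l, η l * (d i l - d j l) ≤ _ := hnum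
      _ = S * d j i - 2 * η i * d j i := hsumeq
  have : L1Cent d η i ≥ 1 - max 0 (1 - a) := by
    unfold L1Cent
    linarith [key]
  have heq : 1 - max 0 (1 - a) = min a 1 := by
    rcases le_total a 1 with h | h
    · rw [max_eq_right (by linarith), min_eq_left h]; ring
    · rw [max_eq_left (by linarith), min_eq_right h]; ring
  linarith [heq ▸ this]
end

section
/- Minimum at infinity: Suppose the distances from vertex v_1 are given by a family d_t with d_t(v_1,w) → ∞ as t → ∞ for all w ≠ v_1, d_t(v_1,w)/d_t(v_1,w') → 1 for all w, w' ≠ v_1, and distances among v_2,...,v_n fixed and finite. Then the L1 centrality of v_1 computed with d_t converges, as t → ∞, to min{2η_1/η_·, 1}. -/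
open Finset

open Filter Topology

private lemma tendsto_sup'_of_tendsto {ι : Type*} {s : Finset ι} (hs : s.Nonempty)
    {f : ι → ℕ → ℝ} {L : ℝ} (h : ∀ i ∈ s, Tendsto (f i) atTop (𝓝 L)) :
    Tendsto (fun t => s.sup' hs (fun i => f i t)) atTop (𝓝 L) := by
  induction hs using Finset.Nonempty.cons_induction with
  | singleton a =>
    simp only [Finset.sup'_singleton]
    exact h a (Finset.mem_singleton_self a)
  | cons a s ha hs ih =>
    simp only [Finset.sup'_cons hs]
    have := (h a (by simp)).max (ih (fun i hi => h i (Finset.mem_cons_of_mem hi)))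
    simpa using this

/-- Minimum at infinity: as vertex `v₁` is moved to infinity (its distances to all
other vertices tend to `∞` with ratios tending to `1`, while the distances among the
other vertices stay fixed), its L1 centrality tends to `min {2η₁/η_·, 1}`. -/
theorem l1cent_tendsto_at_infinity {n : ℕ} (hn : 2 ≤ n)
    (dseq : ℕ → Fin n → Fin n → ℝ) (v1 : Fin n)
    (hsymm : ∀ t i j, dseq t i j = dseq t j i)
    (hzero : ∀ t i, dseq t i i = 0)
    (hpos : ∀ t i j, i ≠ j → 0 < dseq t i j)
    (htri : ∀ t i j l, dseq t i l ≤ dseq t i j + dseq t j l)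
    (hfix : ∀ t i j, i ≠ v1 → j ≠ v1 → dseq t i j = dseq 0 i j)
    (hinf : ∀ w, w ≠ v1 → Tendsto (fun t => dseq t v1 w) atTop atTop)
    (hratio : ∀ w w', w ≠ v1 → w' ≠ v1 →
      Tendsto (fun t => dseq t v1 w / dseq t v1 w') atTop (𝓝 1))
    (η : Fin n → ℝ) (hη : ∀ i, 0 ≤ η i) (hsum : 0 < ∑ j, η j) :
    Tendsto (fun t => L1Cent (dseq t) η v1) atTop
      (𝓝 (min (2 * η v1 / ∑ j, η j) 1)) := by
  set S : ℝ := ∑ j, η j with hSdef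
  have hS : S ≠ 0 := ne_of_gt hsum
  haveI : Nontrivial (Fin n) := by
    refine Fin.nontrivial_iff_two_le.mpr hn
  obtain ⟨w0, hw0⟩ := exists_ne v1
  have hne : (Finset.univ.erase v1).Nonempty :=
    ⟨w0, Finset.mem_erase.mpr ⟨hw0, Finset.mem_univ _⟩⟩
  have hset : {j : Fin n | j ≠ v1} = ↑(Finset.univ.erase v1) := by
    ext j; simp
  -- rewrite L1Cent with a finite sup'
  have hL1 : ∀ t, L1Cent (dseq t) η v1 =
      1 - (Finset.univ.erase v1).sup' hne
        (fun j => max 0 ((∑ i, η i * (dseq t v1 i - dseq t j i)) / (S * dseq t j v1))) := by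
    intro t
    unfold L1Cent
    rw [hset, ← Finset.sup'_eq_csSup_image _ hne]
  -- limit for each j ≠ v1
  have hkey : ∀ j ∈ Finset.univ.erase v1,
      Tendsto (fun t => max 0 ((∑ i, η i * (dseq t v1 i - dseq t j i)) / (S * dseq t j v1)))
        atTop (𝓝 (max 0 (1 - 2 * η v1 / S))) := by
    intro j hj
    have hjv : j ≠ v1 := (Finset.mem_erase.mp hj).1
    have hD : ∀ t, dseq t j v1 ≠ 0 := fun t => (hpos t j v1 hjv).ne'
    have hterm : ∀ i : Fin n,
        Tendsto (fun t => η i * (dseq t v1 i - dseq t j i) / (S * dseq t j v1))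
          atTop (𝓝 (if i = v1 then -(η v1 / S) else η i / S)) := by
      intro i
      by_cases hi : i = v1
      · rw [if_pos hi, hi]
        have heq : ∀ t, η v1 * (dseq t v1 v1 - dseq t j v1) / (S * dseq t j v1)
            = -(η v1 / S) := by
          intro t
          rw [hzero t v1]
          have hD' : dseq t j v1 ≠ 0 := hD t
          field_simp
          ring
        exact Tendsto.congr (fun t => (heq t).symm) tendsto_const_nhds
      · rw [if_neg hi]
        have heq : ∀ t, η i * (dseq t v1 i - dseq t j i) / (S * dseq t j v1)
            = (η i / S) * (dseq t v1 i / dseq t v1 j)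
              - (η i * dseq 0 j i / S) * (dseq t v1 j)⁻¹ := by
          intro t
          rw [hfix t j i hjv hi, hsymm t j v1]
          have hD' : dseq t v1 j ≠ 0 := (hpos t v1 j (Ne.symm hjv)).ne'
          field_simp
        have h1 : Tendsto (fun t => (η i / S) * (dseq t v1 i / dseq t v1 j)
              - (η i * dseq 0 j i / S) * (dseq t v1 j)⁻¹) atTop
            (𝓝 ((η i / S) * 1 - (η i * dseq 0 j i / S) * 0)) :=
          (tendsto_const_nhds.mul (hratio i j hi hjv)).sub
            (tendsto_const_nhds.mul (hinf j hjv).inv_tendsto_atTop)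
        have h2 := h1.congr (fun t => (heq t).symm)
        simpa using h2
    have hsum' : Tendsto (fun t => ∑ i, η i * (dseq t v1 i - dseq t j i) / (S * dseq t j v1))
        atTop (𝓝 (∑ i, if i = v1 then -(η v1 / S) else η i / S)) :=
      tendsto_finset_sum _ (fun i _ => hterm i)
    have hsval : (∑ i, if i = v1 then -(η v1 / S) else η i / S) = 1 - 2 * η v1 / S := by
      rw [← Finset.add_sum_erase _ _ (Finset.mem_univ v1), if_pos rfl]
      rw [Finset.sum_congr rfl (fun i hi => if_neg (Finset.mem_erase.mp hi).1)]
      rw [← Finset.sum_div, Finset.sum_erase_eq_sub (Finset.mem_univ v1)]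
      rw [← hSdef]
      field_simp
      ring
    rw [hsval] at hsum'
    have hsum'' : Tendsto (fun t => (∑ i, η i * (dseq t v1 i - dseq t j i)) / (S * dseq t j v1))
        atTop (𝓝 (1 - 2 * η v1 / S)) := by
      refine hsum'.congr (fun t => ?_)
      rw [Finset.sum_div]
    exact tendsto_const_nhds.max hsum''
  have hsup := tendsto_sup'_of_tendsto hne hkey
  have hfinal : Tendsto (fun t => L1Cent (dseq t) η v1) atTop
      (𝓝 (1 - max 0 (1 - 2 * η v1 / S))) := by
    exact (hsup.const_sub 1).congr (fun t => (hL1 t).symm)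
  have hval : 1 - max 0 (1 - 2 * η v1 / S) = min (2 * η v1 / S) 1 := by
    rcases le_total (2 * η v1 / S) 1 with h | h
    · rw [max_eq_right (by linarith), min_eq_left h]; ring
    · rw [max_eq_left (by linarith), min_eq_right h]; ring
  rw [hval] at hfinal
  exact hfinal
end

section
/- Symmetrization makes a median: if the multiplicity of vertex v_i is replaced by η_· + η_i (with other multiplicities unchanged), then v_i is a graph median of the resulting weighted graph; moreover, if η_i > 0, then v_i is the unique graph median. -/
open Finset

/-- Symmetrization makes a median: replacing the multiplicity of `v_i` by `η_· + η_i`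
makes `v_i` a graph median, and the unique one when `η_i > 0`. -/
theorem symmetrization_median {n : ℕ} (d : Fin n → Fin n → ℝ)
    (hsymm : ∀ i j, d i j = d j i)
    (hzero : ∀ i, d i i = 0)
    (hpos : ∀ i j, i ≠ j → 0 < d i j)
    (htri : ∀ i j l, d i l ≤ d i j + d j l)
    (η : Fin n → ℝ) (hη : ∀ j, 0 ≤ η j) (hsum : 0 < ∑ j, η j)
    (i : Fin n) :
    (∀ v, ∑ j, Function.update η i ((∑ j, η j) + η i) j * d i j ≤
        ∑ j, Function.update η i ((∑ j, η j) + η i) j * d v j) ∧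
      (0 < η i → ∀ v, (∀ w, ∑ j, Function.update η i ((∑ j, η j) + η i) j * d v j ≤
        ∑ j, Function.update η i ((∑ j, η j) + η i) j * d w j) → v = i) := by
  set S := ∑ j, η j with hS
  set η' := Function.update η i (S + η i) with hη'
  have hη'i : η' i = S + η i := by simp [hη']
  have hη'nonneg : ∀ j, 0 ≤ η' j := by
    intro j
    rcases eq_or_ne j i with h | h
    · subst h; rw [hη'i]; linarith [hη j, hsum]
    · rw [hη', Function.update_of_ne h]; exact hη j
  have hsum' : ∑ j, η' j = 2 * S := by
    rw [hη', Finset.sum_update_of_mem (Finset.mem_univ i)]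
    have h2 : ∑ x ∈ Finset.univ \ {i}, η x = S - η i := by
      rw [Finset.sum_sdiff_eq_sub (Finset.subset_univ _)]
      simp [hS]
    rw [h2]; ring
  have key : ∀ v, ∑ j, η' j * d i j + 2 * η i * d v i ≤ ∑ j, η' j * d v j := by
    intro v
    have h1 : ∑ j, (-(η' j * d v i) + (if j = i then 2 * η' i * d v i else 0))
        ≤ ∑ j, (η' j * d v j - η' j * d i j) := by
      apply Finset.sum_le_sum
      intro j _
      rcases eq_or_ne j i with h | h
      · subst h
        simp only [eq_self_iff_true, if_true, hzero, mul_zero, sub_zero]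
        linarith
      · simp only [if_neg h, add_zero]
        have ht : d i j ≤ d i v + d v j := htri i v j
        have hd : -(d v i) ≤ d v j - d i j := by
          have hvi : d v i = d i v := hsymm v i
          linarith
        nlinarith [mul_le_mul_of_nonneg_left hd (hη'nonneg j)]
    have h2 : ∑ j, (-(η' j * d v i) + (if j = i then 2 * η' i * d v i else 0))
        = 2 * η i * d v i := by
      rw [Finset.sum_add_distrib, Finset.sum_ite_eq' Finset.univ i
        (fun _ => 2 * η' i * d v i)]
      simp only [Finset.mem_univ, if_pos]
      rw [Finset.sum_neg_distrib, ← Finset.sum_mul, hsum', hη'i]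
      ring
    have h3 : ∑ j, (η' j * d v j - η' j * d i j)
        = ∑ j, η' j * d v j - ∑ j, η' j * d i j := Finset.sum_sub_distrib _ _
    rw [h2, h3] at h1
    linarith
  have hdnn : ∀ v, 0 ≤ d v i := by
    intro v
    rcases eq_or_ne v i with h | h
    · simp [h, hzero]
    · exact (hpos v i h).le
  constructor
  · intro v
    have := key v
    nlinarith [hη i, hdnn v]
  · intro hi v hmin
    by_contra hvi
    have h1 := key v
    have h2 := hmin i
    have hd := hpos v i hvi
    nlinarith
end

section
/- With equal multiplicities η_i = 1, the supremum over y ∈ ℝ^d \ {x₁} of {Σ_{i=1}^n (‖x₁ - X_i‖ - ‖y - X_i‖)/(n ‖y - x₁‖)}^+ equals (‖ē_n(x₁)‖ - 1/n)^+, where ē_n(x₁) = (1/n) Σ_{i=2}^n (X_i - x₁)/‖X_i - x₁‖. -/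
open Finset

open scoped RealInnerProductSpace

variable {E : Type*} [NormedAddCommGroup E] [InnerProductSpace ℝ E]

lemma vz_ub (x₁ y z : E) (hz : z ≠ x₁) :
    ‖x₁ - z‖ - ‖y - z‖ ≤ ⟪y - x₁, ‖z - x₁‖⁻¹ • (z - x₁)⟫ := by
  have hr : 0 < ‖z - x₁‖ := by
    rw [norm_pos_iff, sub_ne_zero]; exact hz
  rw [real_inner_smul_right, le_inv_mul_iff₀ hr]
  have h1 : ⟪y - x₁, z - x₁⟫ = ⟪y - z, z - x₁⟫ + ‖z - x₁‖ ^ 2 := by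
    have h : y - x₁ = (y - z) + (z - x₁) := by abel
    rw [h, inner_add_left, real_inner_self_eq_norm_sq]
  have h2 : -(‖y - z‖ * ‖z - x₁‖) ≤ ⟪y - z, z - x₁⟫ :=
    neg_le_of_abs_le (abs_real_inner_le_norm _ _)
  have h3 : ‖x₁ - z‖ = ‖z - x₁‖ := norm_sub_rev _ _
  nlinarith

lemma vz_lb (x₁ z v : E) (hv : ‖v‖ = 1) {t : ℝ} (ht : 0 < t) (hz : z ≠ x₁)
    (htr : t ≤ ‖z - x₁‖) :
    t * ⟪v, ‖z - x₁‖⁻¹ • (z - x₁)⟫ - t ^ 2 / (2 * ‖z - x₁‖) ≤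
      ‖x₁ - z‖ - ‖(x₁ + t • v) - z‖ := by
  set a := z - x₁ with ha
  set r := ‖a‖ with hrdef
  have hr : 0 < r := by rw [hrdef, norm_pos_iff, ha, sub_ne_zero]; exact hz
  set c := ⟪v, a⟫ with hc
  have hcabs : |c| ≤ r := by
    have := abs_real_inner_le_norm v a
    rwa [hv, one_mul] at this
  have habs := abs_le.mp hcabs
  have hB : 0 ≤ r + t * (t / 2 - c) / r := by
    have h1 : -t ≤ t * (t / 2 - c) / r := by
      rw [le_div_iff₀ hr]
      nlinarith
    linarith
  have hkey : ‖t • v - a‖ ≤ r + t * (t / 2 - c) / r := by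
    have hsq : ‖t • v - a‖ ^ 2 ≤ (r + t * (t / 2 - c) / r) ^ 2 := by
      have hn : ‖t • v - a‖ ^ 2 = t ^ 2 - 2 * t * c + r ^ 2 := by
        rw [← real_inner_self_eq_norm_sq]
        simp only [inner_sub_sub_self, real_inner_smul_left, real_inner_smul_right,
          real_inner_self_eq_norm_sq, norm_smul, hv]
        have hc' : ⟪a, v⟫ = c := by rw [hc]; exact (real_inner_comm a v).symm
        rw [hc', Real.norm_eq_abs, abs_of_pos ht, ← hrdef]
        ring
      have hexp : (r + t * (t / 2 - c) / r) ^ 2 =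
          r ^ 2 + 2 * t * (t / 2 - c) + (t * (t / 2 - c) / r) ^ 2 := by
        field_simp; ring
      rw [hn, hexp]
      nlinarith [sq_nonneg (t * (t / 2 - c) / r)]
    exact (pow_le_pow_iff_left₀ (norm_nonneg _) hB two_ne_zero).mp hsq
  have heq : (x₁ + t • v) - z = t • v - a := by rw [ha]; abel
  have h3 : ‖x₁ - z‖ = r := by rw [hrdef, ha, norm_sub_rev]
  rw [heq, h3, real_inner_smul_right, ← hc]
  have : t * (r⁻¹ * c) - t ^ 2 / (2 * r) = r - (r + t * (t / 2 - c) / r) := by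
    field_simp; ring
  linarith [hkey]


/-- Vardi–Zhang identity: with equal multiplicities, the supremum over
`y ∈ ℝ^d \ {x₁}` of `{Σᵢ₌₁ⁿ (‖x₁ - Xᵢ‖ - ‖y - Xᵢ‖)/(n ‖y - x₁‖)}⁺` equals
`(‖ē_n(x₁)‖ - 1/n)⁺`, where `ē_n(x₁) = (1/n) Σᵢ₌₂ⁿ (Xᵢ - x₁)/‖Xᵢ - x₁‖`.
Here the data points are `x₁` together with `Y 0, …, Y (m-1)` (so `n = m + 1`),
and the `i = 1` term of the numerator sum is `‖x₁ - x₁‖ - ‖y - x₁‖ = -‖y - x₁‖`. -/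
theorem vardi_zhang_sup_identity {d m : ℕ} (hd : 0 < d)
    (x₁ : EuclideanSpace ℝ (Fin d)) (Y : Fin m → EuclideanSpace ℝ (Fin d))
    (hY : ∀ i, Y i ≠ x₁) :
    sSup ((fun y => max 0 ((-‖y - x₁‖ + ∑ i, (‖x₁ - Y i‖ - ‖y - Y i‖)) /
          (((m : ℝ) + 1) * ‖y - x₁‖))) '' {y | y ≠ x₁}) =
      max 0 (‖((m : ℝ) + 1)⁻¹ • ∑ i, ‖Y i - x₁‖⁻¹ • (Y i - x₁)‖ - 1 / ((m : ℝ) + 1)) := by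
  set e : EuclideanSpace ℝ (Fin d) := ∑ i, ‖Y i - x₁‖⁻¹ • (Y i - x₁) with he
  have hm : (0:ℝ) < (m:ℝ) + 1 := by positivity
  have hb : ‖((m : ℝ) + 1)⁻¹ • e‖ - 1 / ((m : ℝ) + 1) = (‖e‖ - 1) / ((m:ℝ) + 1) := by
    rw [norm_smul, Real.norm_eq_abs, abs_of_pos (inv_pos.mpr hm)]
    field_simp
  rw [hb]
  set R : ℝ := (‖e‖ - 1) / ((m:ℝ) + 1) with hR
  -- a point different from x₁
  have hy₀ : x₁ + EuclideanSpace.single ⟨0, hd⟩ (1:ℝ) ≠ x₁ := by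
    intro h
    have : EuclideanSpace.single (⟨0, hd⟩ : Fin d) (1:ℝ) = 0 := by
      have := congrArg (· - x₁) h
      simpa using this
    have h1 := congrArg norm this
    rw [EuclideanSpace.norm_single] at h1
    norm_num at h1
  apply csSup_eq_of_forall_le_of_forall_lt_exists_gt
  · exact ⟨_, ⟨_, hy₀, rfl⟩⟩
  · rintro a ⟨y, hy, rfl⟩
    have hny : 0 < ‖y - x₁‖ := by rw [norm_pos_iff, sub_ne_zero]; exact hy
    refine max_le_max le_rfl ?_
    have hsum : ∑ i, (‖x₁ - Y i‖ - ‖y - Y i‖) ≤ ⟪y - x₁, e⟫ := by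
      rw [he, inner_sum]
      exact Finset.sum_le_sum fun i _ => vz_ub x₁ y (Y i) (hY i)
    have hip : ⟪y - x₁, e⟫ ≤ ‖y - x₁‖ * ‖e‖ := real_inner_le_norm _ _
    rw [div_le_div_iff₀ (by positivity) hm]
    nlinarith
  · intro w hw
    by_cases hw0 : w < 0
    · exact ⟨_, ⟨_, hy₀, rfl⟩, lt_of_lt_of_le hw0 (le_max_left _ _)⟩
    push_neg at hw0
    have hwR : w < R := by
      rcases le_or_gt R 0 with h | h
      · rw [max_eq_left h] at hw; linarith
      · rwa [max_eq_right h.le] at hw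
    have hR0 : 0 < R := lt_of_le_of_lt hw0 hwR
    have he1 : 1 < ‖e‖ := by
      rw [hR, lt_div_iff₀ hm] at hR0; linarith
    have hene : e ≠ 0 := by
      intro h; rw [h, norm_zero] at he1; linarith
    have hm0 : 0 < m := by
      rcases Nat.eq_zero_or_pos m with h | h
      · subst h
        rw [he] at hene
        simp at hene
      · exact h
    set v : EuclideanSpace ℝ (Fin d) := ‖e‖⁻¹ • e with hv'
    have hv : ‖v‖ = 1 := norm_smul_inv_norm hene
    have hne : (univ : Finset (Fin m)).Nonempty := by
      rw [Finset.univ_nonempty_iff]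
      exact Fin.pos_iff_nonempty.mp hm0
    set rmin : ℝ := (univ : Finset (Fin m)).inf' hne (fun i => ‖Y i - x₁‖) with hrmin
    have hrminpos : 0 < rmin := by
      rw [hrmin, Finset.lt_inf'_iff]
      intro i _
      rw [norm_pos_iff, sub_ne_zero]; exact hY i
    set S : ℝ := ∑ i, (2 * ‖Y i - x₁‖)⁻¹ with hS
    have hSpos : 0 ≤ S := by
      rw [hS]
      apply Finset.sum_nonneg
      intro i _
      positivity
    set ε : ℝ := (‖e‖ - 1) - w * ((m:ℝ) + 1) with hε
    have hεpos : 0 < ε := by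
      rw [hR, lt_div_iff₀ hm] at hwR
      rw [hε]; linarith
    set t : ℝ := min rmin (ε / (S + 1)) with htdef
    have ht : 0 < t := lt_min hrminpos (div_pos hεpos (by linarith))
    have htr : ∀ i : Fin m, t ≤ ‖Y i - x₁‖ := fun i =>
      le_trans (min_le_left _ _) (Finset.inf'_le _ (Finset.mem_univ i))
    have htS : t * (S + 1) ≤ ε := by
      have h1 : t ≤ ε / (S + 1) := min_le_right _ _
      rw [le_div_iff₀ (by linarith : (0:ℝ) < S + 1)] at h1
      exact h1
    set y : EuclideanSpace ℝ (Fin d) := x₁ + t • v with hy'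
    have hyx : y - x₁ = t • v := by rw [hy']; abel
    have hynorm : ‖y - x₁‖ = t := by
      rw [hyx, norm_smul, hv, mul_one, Real.norm_eq_abs, abs_of_pos ht]
    have hyne : y ≠ x₁ := by
      intro h
      rw [h, sub_self, norm_zero] at hynorm
      linarith
    refine ⟨_, ⟨y, hyne, rfl⟩, ?_⟩
    have hve : ⟪v, e⟫ = ‖e‖ := by
      rw [hv', real_inner_smul_left, real_inner_self_eq_norm_sq]
      have : ‖e‖ ≠ 0 := by positivity
      field_simp
    have hsum : t * ‖e‖ - t ^ 2 * S ≤ ∑ i, (‖x₁ - Y i‖ - ‖y - Y i‖) := by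
      have h1 : ∀ i ∈ (univ : Finset (Fin m)),
          t * ⟪v, ‖Y i - x₁‖⁻¹ • (Y i - x₁)⟫ - t ^ 2 * (2 * ‖Y i - x₁‖)⁻¹ ≤
            ‖x₁ - Y i‖ - ‖y - Y i‖ := by
        intro i _
        have := vz_lb x₁ (Y i) v hv ht (hY i) (htr i)
        rw [hy']
        rw [div_eq_mul_inv] at this
        convert this using 2
      have h2 := Finset.sum_le_sum h1
      rw [Finset.sum_sub_distrib, ← Finset.mul_sum, ← Finset.mul_sum, ← hS,
        ← inner_sum, ← he, hve] at h2
      exact h2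
    -- lower bound on the quotient
    have hkey : (‖e‖ - 1 - t * S) / ((m:ℝ) + 1) =
        (t * ‖e‖ - t ^ 2 * S - t) / (((m:ℝ) + 1) * t) := by
      rw [div_eq_div_iff hm.ne' (mul_pos hm ht).ne']
      ring
    have hwlt : w < (‖e‖ - 1 - t * S) / ((m:ℝ) + 1) := by
      rw [lt_div_iff₀ hm]
      have : t * S < ε := by nlinarith
      rw [hε] at this
      linarith
    calc w < (‖e‖ - 1 - t * S) / ((m:ℝ) + 1) := hwlt
      _ = (t * ‖e‖ - t ^ 2 * S - t) / (((m:ℝ) + 1) * t) := hkey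
      _ ≤ (-‖y - x₁‖ + ∑ i, (‖x₁ - Y i‖ - ‖y - Y i‖)) / (((m:ℝ) + 1) * ‖y - x₁‖) := by
          rw [hynorm]
          exact (div_le_div_iff_of_pos_right (mul_pos hm ht)).mpr (by linarith)
      _ ≤ _ := le_max_right _ _
end
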